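/- Let W be an irreducible complex reflection group with largest degree d_r. Then d_r is a regular number for W if and only if the valuation (minimal total degree of a monomial) of the discriminant polynomial Δ_f equals (N + N*)/d_r, for any (equivalently, some) system of basic invariants f. -/

import Mathlib

open MvPolynomial

/-- A (complex) reflection of `ℂ^r`: a finite order invertible linear map, distinct from
the identity, whose fixed subspace `ker(s - Id)` is a hyperplane. -/
def IsReflection {r : ℕ} (w : (Fin r → ℂ) ≃ₗ[ℂ] (Fin r → ℂ)) : Prop :=
  IsOfFinOrder w ∧ w ≠ 1 ∧
    Module.finrank ℂ (LinearMap.ker ((w : (Fin r → ℂ) →ₗ[ℂ] (Fin r → ℂ)) - LinearMap.id))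
      = r - 1

/-- The fixed subspace `ker(w - Id)` of a linear automorphism of `ℂ^r`. -/
noncomputable def fixedSpace {r : ℕ} (w : (Fin r → ℂ) ≃ₗ[ℂ] (Fin r → ℂ)) :
    Submodule ℂ (Fin r → ℂ) :=
  LinearMap.ker ((w : (Fin r → ℂ) →ₗ[ℂ] (Fin r → ℂ)) - LinearMap.id)

/-- `d` is a regular number for `W` iff some `w ∈ W` has an eigenvector, for a root of
unity `ζ` of order `d`, which lies on no reflecting hyperplane (is fixed by no
reflection of `W`). -/
def IsRegularNumber {r : ℕ} (W : Subgroup ((Fin r → ℂ) ≃ₗ[ℂ] (Fin r → ℂ))) (d : ℕ) :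
    Prop :=
  ∃ ζ : ℂ, IsPrimitiveRoot ζ d ∧ ∃ w, w ∈ W ∧ ∃ v : Fin r → ℂ,
    (∀ s, s ∈ W → IsReflection s → s v ≠ v) ∧ w v = ζ • v


noncomputable def compAut {r : ℕ} (w : (Fin r → ℂ) ≃ₗ[ℂ] (Fin r → ℂ)) :
    MvPolynomial (Fin r) ℂ →ₐ[ℂ] MvPolynomial (Fin r) ℂ :=
  aeval (fun i => ∑ j, C (w (fun k => if j = k then 1 else 0) i) * X j)

lemma eval_compAut {r : ℕ} (w : (Fin r → ℂ) ≃ₗ[ℂ] (Fin r → ℂ))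
    (P : MvPolynomial (Fin r) ℂ) (v : Fin r → ℂ) :
    eval v (compAut w P) = eval (w v) P := by
  have h1 : eval v (compAut w P)
      = aeval (fun i => eval v (∑ j, C (w (fun k => if j = k then 1 else 0) i) * X j)) P := by
    have hcoe : ∀ q : MvPolynomial (Fin r) ℂ, eval v q = aeval v q := fun q => by
      rw [← coe_aeval_eq_eval]; rfl
    rw [compAut, hcoe, comp_aeval_apply]
    simp only [hcoe]
  rw [h1]
  have h2 : (fun i => eval v (∑ j, C (w (fun k => if j = k then 1 else 0) i) * X j)) = w v := by
    funext i
    have := LinearMap.pi_apply_eq_sum_univ (w : (Fin r → ℂ) →ₗ[ℂ] (Fin r → ℂ)) v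
    have h3 : w v i = ∑ j, v j * w (fun k => if j = k then 1 else 0) i := by
      rw [show (w v : Fin r → ℂ) = ((w : (Fin r → ℂ) →ₗ[ℂ] (Fin r → ℂ)) v) from rfl, this]
      simp [Finset.sum_apply, smul_eq_mul]
    rw [h3]
    simp [mul_comm]
  rw [h2, ← coe_aeval_eq_eval]
  rfl

lemma eval_smul_of_isHomogeneous {r n : ℕ} (p : MvPolynomial (Fin r) ℂ)
    (hp : p.IsHomogeneous n) (c : ℂ) (v : Fin r → ℂ) :
    eval (c • v) p = c ^ n * eval v p := by
  rw [eval_eq', eval_eq', Finset.mul_sum]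
  refine Finset.sum_congr rfl fun m hm => ?_
  have hw : ∑ i, m i = n := by
    have := hp (mem_support_iff.mp hm)
    rw [← this]
    rw [Finsupp.weight_apply]
    rw [Finsupp.sum_fintype]
    · simp
    · simp
  rw [← hw]
  have : ∏ i, (c • v) i ^ m i = (∏ i, c ^ m i) * ∏ i, v i ^ m i := by
    rw [← Finset.prod_mul_distrib]
    refine Finset.prod_congr rfl fun i _ => ?_
    simp [mul_pow]
  rw [this, Finset.prod_pow_eq_pow_sum]
  ring

lemma eval_aeval' {r : ℕ} (v : Fin r → ℂ) (g : Fin r → MvPolynomial (Fin r) ℂ)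
    (P : MvPolynomial (Fin r) ℂ) :
    eval v (aeval g P) = eval (fun i => eval v (g i)) P := by
  have hcoe : ∀ q : MvPolynomial (Fin r) ℂ, eval v q = aeval v q := fun q => by
    rw [← coe_aeval_eq_eval]; rfl
  rw [hcoe, comp_aeval_apply]
  have : (fun i => (aeval v) (g i)) = fun i => eval v (g i) := by
    funext i; rw [hcoe]
  rw [this, ← coe_aeval_eq_eval]
  rfl

/-- Interpolation on a finite set. -/
lemma exists_poly_eval_eq {r : ℕ} (S : Finset (Fin r → ℂ)) (g : (Fin r → ℂ) → ℂ) :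
    ∃ P : MvPolynomial (Fin r) ℂ, ∀ q ∈ S, eval q P = g q := by
  classical
  have key : ∀ p : Fin r → ℂ, ∃ P : MvPolynomial (Fin r) ℂ,
      eval p P = 1 ∧ ∀ q ∈ S, q ≠ p → eval q P = 0 := by
    intro p
    refine ⟨∏ q ∈ S.erase p, if h : q = p then 1 else
      (C ((p (Function.ne_iff.mp h).choose - q (Function.ne_iff.mp h).choose)⁻¹) *
        (X (Function.ne_iff.mp h).choose - C (q (Function.ne_iff.mp h).choose))), ?_, ?_⟩
    · rw [map_prod]
      refine Finset.prod_eq_one fun q hq => ?_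
      have hqp : q ≠ p := Finset.ne_of_mem_erase hq
      rw [dif_neg hqp]
      have hi := (Function.ne_iff.mp hqp).choose_spec
      simp only [map_mul, eval_C, map_sub, eval_X]
      rw [inv_mul_cancel₀ (sub_ne_zero.mpr (Ne.symm hi))]
    · intro q hq hqp
      rw [map_prod]
      refine Finset.prod_eq_zero (Finset.mem_erase.mpr ⟨hqp, hq⟩) ?_
      rw [dif_neg hqp]
      simp only [map_mul, eval_C, map_sub, eval_X]
      rw [sub_self, mul_zero]
  choose ind hind1 hind2 using key
  refine ⟨∑ p ∈ S, C (g p) * ind p, fun q hq => ?_⟩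
  rw [map_sum, Finset.sum_eq_single q]
  · simp [hind1 q]
  · intro p hp hpq
    simp only [map_mul, eval_C]
    rw [hind2 p q hq (Ne.symm hpq), mul_zero]
  · intro h; exact absurd hq h

/-- A sum over the group of a composed polynomial is invariant. -/
lemma reynolds_invariant {r : ℕ} (W : Subgroup ((Fin r → ℂ) ≃ₗ[ℂ] (Fin r → ℂ)))
    (hWfin : (W : Set ((Fin r → ℂ) ≃ₗ[ℂ] (Fin r → ℂ))).Finite) (P : MvPolynomial (Fin r) ℂ) (u : (Fin r → ℂ) ≃ₗ[ℂ] (Fin r → ℂ))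
    (hu : u ∈ W) (v : Fin r → ℂ) :
    eval (u v) (∑ w ∈ hWfin.toFinset, compAut w P)
      = eval v (∑ w ∈ hWfin.toFinset, compAut w P) := by
  rw [map_sum, map_sum]
  simp only [eval_compAut]
  exact Finset.sum_nbij' (fun w => w * u) (fun w => w * u⁻¹)
    (fun w hw => hWfin.mem_toFinset.mpr (mul_mem (hWfin.mem_toFinset.mp hw) hu))
    (fun w hw => hWfin.mem_toFinset.mpr (mul_mem (hWfin.mem_toFinset.mp hw) (inv_mem hu)))
    (fun w hw => mul_inv_cancel_right w u)
    (fun w hw => inv_mul_cancel_right w u)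
    (fun w hw => rfl)

lemma orbit_separation {r : ℕ} (W : Subgroup ((Fin r → ℂ) ≃ₗ[ℂ] (Fin r → ℂ)))
    (hWfin : (W : Set ((Fin r → ℂ) ≃ₗ[ℂ] (Fin r → ℂ))).Finite)
    (f : Fin r → MvPolynomial (Fin r) ℂ)
    (hf_gen : ∀ P : MvPolynomial (Fin r) ℂ,
      (∀ w ∈ W, ∀ v : Fin r → ℂ, eval (w v) P = eval v P) ↔
        P ∈ Algebra.adjoin ℂ (Set.range f))
    (v₁ v₂ : Fin r → ℂ) (h : ∀ i, eval v₁ (f i) = eval v₂ (f i)) :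
    ∃ w ∈ W, w v₂ = v₁ := by
  classical
  by_contra hcon
  push_neg at hcon
  set Wfin := hWfin.toFinset with hWfindef
  have h1W : (1 : (Fin r → ℂ) ≃ₗ[ℂ] (Fin r → ℂ)) ∈ Wfin :=
    hWfin.mem_toFinset.mpr (one_mem W)
  set O₁ : Finset (Fin r → ℂ) := Wfin.image (fun w => w v₁) with hO₁
  set O₂ : Finset (Fin r → ℂ) := Wfin.image (fun w => w v₂) with hO₂
  have hdisj : ∀ u ∈ O₂, u ∉ O₁ := by
    intro u hu2 hu1
    rw [hO₁, Finset.mem_image] at hu1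
    rw [hO₂, Finset.mem_image] at hu2
    obtain ⟨a, ha, hav⟩ := hu1
    obtain ⟨b, hb, hbv⟩ := hu2
    rw [hWfindef, Set.Finite.mem_toFinset] at ha hb
    refine hcon (a⁻¹ * b) (mul_mem (inv_mem ha) hb) ?_
    show (a⁻¹ * b) v₂ = v₁
    have h2 : (a⁻¹ * b) v₂ = a⁻¹ (b v₂) := rfl
    rw [h2, hbv, ← hav]
    exact a.symm_apply_apply v₁
  obtain ⟨P, hP⟩ := exists_poly_eval_eq (O₁ ∪ O₂) (fun u => if u ∈ O₁ then 1 else 0)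
  set Pbar := ∑ w ∈ Wfin, compAut w P with hPbar
  have hinv : ∀ u ∈ W, ∀ v : Fin r → ℂ, eval (u v) Pbar = eval v Pbar :=
    fun u hu v => reynolds_invariant W hWfin P u hu v
  obtain ⟨Q, hQ⟩ : ∃ Q, aeval f Q = Pbar := by
    have := (hf_gen Pbar).mp hinv
    rw [Algebra.adjoin_range_eq_range_aeval] at this
    obtain ⟨Q, hQ⟩ := this
    exact ⟨Q, hQ⟩
  have heq : eval v₁ Pbar = eval v₂ Pbar := by
    rw [← hQ, eval_aeval', eval_aeval',
      show (fun i => eval v₁ (f i)) = (fun i => eval v₂ (f i)) from funext h]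
  have hv1 : eval v₁ Pbar = (Wfin.card : ℂ) := by
    rw [hPbar, map_sum]
    rw [Finset.sum_congr rfl (fun w hw => ?_)]
    · rw [Finset.sum_const, nsmul_eq_mul, mul_one]
    · rw [eval_compAut]
      have hmem : w v₁ ∈ O₁ := Finset.mem_image_of_mem _ hw
      rw [hP _ (Finset.mem_union_left _ hmem), if_pos hmem]
  have hv2 : eval v₂ Pbar = 0 := by
    rw [hPbar, map_sum]
    rw [Finset.sum_congr rfl (fun w hw => ?_)]
    · rw [Finset.sum_const_zero]
    · rw [eval_compAut]
      have hmem : w v₂ ∈ O₂ := Finset.mem_image_of_mem _ hw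
      rw [hP _ (Finset.mem_union_right _ hmem), if_neg (hdisj _ hmem)]
  rw [hv1, hv2] at heq
  have : Wfin.card ≠ 0 := Finset.card_ne_zero_of_mem h1W
  exact this (Nat.cast_eq_zero.mp heq)

lemma exists_preimage {r : ℕ} (W : Subgroup ((Fin r → ℂ) ≃ₗ[ℂ] (Fin r → ℂ)))
    (hWfin : (W : Set ((Fin r → ℂ) ≃ₗ[ℂ] (Fin r → ℂ))).Finite)
    (f : Fin r → MvPolynomial (Fin r) ℂ)
    (hf_alg : AlgebraicIndependent ℂ f)
    (hf_gen : ∀ P : MvPolynomial (Fin r) ℂ,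
      (∀ w ∈ W, ∀ v : Fin r → ℂ, eval (w v) P = eval v P) ↔
        P ∈ Algebra.adjoin ℂ (Set.range f))
    (y : Fin r → ℂ) : ∃ v : Fin r → ℂ, ∀ i, eval v (f i) = y i := by
  classical
  set R₀ : Subalgebra ℂ (MvPolynomial (Fin r) ℂ) := Algebra.adjoin ℂ (Set.range f) with hR₀
  -- Step 1: each X i is integral over R₀
  have hint : ∀ i : Fin r, IsIntegral R₀ (X i : MvPolynomial (Fin r) ℂ) := by
    intro i
    set q : Polynomial (MvPolynomial (Fin r) ℂ) :=
      ∏ w ∈ hWfin.toFinset, (Polynomial.X - Polynomial.C (compAut w (X i))) with hq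
    have hmonic : q.Monic :=
      Polynomial.monic_prod_of_monic _ _ (fun w _ => Polynomial.monic_X_sub_C _)
    have hCA1 : compAut (1 : (Fin r → ℂ) ≃ₗ[ℂ] (Fin r → ℂ)) (X i)
        = (X i : MvPolynomial (Fin r) ℂ) := by
      apply MvPolynomial.funext
      intro x
      rw [eval_compAut]
      rfl
    have hroot : Polynomial.eval (X i : MvPolynomial (Fin r) ℂ) q = 0 := by
      rw [hq, Polynomial.eval_prod]
      refine Finset.prod_eq_zero (hWfin.mem_toFinset.mpr (one_mem W)) ?_
      rw [Polynomial.eval_sub, Polynomial.eval_X, Polynomial.eval_C, hCA1, sub_self]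
    have hmapq : ∀ v : Fin r → ℂ, q.map (eval v : MvPolynomial (Fin r) ℂ →+* ℂ)
        = ∏ w ∈ hWfin.toFinset, (Polynomial.X - Polynomial.C (w v i)) := by
      intro v
      rw [hq, Polynomial.map_prod]
      refine Finset.prod_congr rfl fun w _ => ?_
      rw [Polynomial.map_sub, Polynomial.map_X, Polynomial.map_C, eval_compAut, eval_X]
    have hcoeff : ∀ n : ℕ, q.coeff n ∈ R₀ := by
      intro n
      rw [hR₀]
      rw [← hf_gen]
      intro u hu v
      have h1 : eval (u v) (q.coeff n) = (q.map (eval (u v) : MvPolynomial (Fin r) ℂ →+* ℂ)).coeff n := by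
        rw [Polynomial.coeff_map]
      have h2 : eval v (q.coeff n) = (q.map (eval v : MvPolynomial (Fin r) ℂ →+* ℂ)).coeff n := by
        rw [Polynomial.coeff_map]
      rw [h1, h2, hmapq, hmapq]
      congr 1
      exact Finset.prod_nbij' (fun w => w * u) (fun w => w * u⁻¹)
        (fun w hw => hWfin.mem_toFinset.mpr (mul_mem (hWfin.mem_toFinset.mp hw) hu))
        (fun w hw => hWfin.mem_toFinset.mpr (mul_mem (hWfin.mem_toFinset.mp hw) (inv_mem hu)))
        (fun w hw => mul_inv_cancel_right w u)
        (fun w hw => inv_mul_cancel_right w u)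
        (fun w hw => rfl)
    have hlifts : q ∈ Polynomial.lifts (algebraMap R₀ (MvPolynomial (Fin r) ℂ)) := by
      rw [Polynomial.lifts_iff_coeff_lifts]
      intro n
      exact ⟨⟨q.coeff n, hcoeff n⟩, rfl⟩
    obtain ⟨q', hq'map, _, hq'monic⟩ :=
      Polynomial.lifts_and_degree_eq_and_monic hlifts hmonic
    refine ⟨q', hq'monic, ?_⟩
    rw [← Polynomial.eval_map, hq'map, hroot]
  -- Step 2: the polynomial ring is integral over R₀
  have hIntAlg : Algebra.IsIntegral R₀ (MvPolynomial (Fin r) ℂ) := by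
    constructor
    intro p
    have hp : p ∈ Algebra.adjoin ℂ (Set.range (X : Fin r → MvPolynomial (Fin r) ℂ)) := by
      rw [MvPolynomial.adjoin_range_X]; trivial
    induction hp using Algebra.adjoin_induction with
    | mem x hx =>
      obtain ⟨i, rfl⟩ := hx
      exact hint i
    | algebraMap c =>
      have : (algebraMap ℂ (MvPolynomial (Fin r) ℂ) c) = algebraMap R₀ (MvPolynomial (Fin r) ℂ)
          ⟨algebraMap ℂ (MvPolynomial (Fin r) ℂ) c, Subalgebra.algebraMap_mem R₀ c⟩ := rfl
      rw [this]
      exact isIntegral_algebraMap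
    | add x y hx hy ihx ihy => exact ihx.add ihy
    | mul x y hx hy ihx ihy => exact ihx.mul ihy
  -- Step 3: the evaluation homomorphism on R₀
  set ψ : R₀ →ₐ[ℂ] ℂ := (aeval y : MvPolynomial (Fin r) ℂ →ₐ[ℂ] ℂ).comp
    (hf_alg.aevalEquiv.symm : R₀ →ₐ[ℂ] MvPolynomial (Fin r) ℂ) with hψ
  have hfmem : ∀ i, f i ∈ R₀ := fun i => Algebra.subset_adjoin (Set.mem_range_self i)
  have hψf : ∀ i, ψ ⟨f i, hfmem i⟩ = y i := by
    intro i
    have h1 : hf_alg.aevalEquiv (X i) = ⟨f i, hfmem i⟩ := by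
      apply Subtype.ext
      have := hf_alg.algebraMap_aevalEquiv (X i)
      rw [aeval_X] at this
      exact this
    rw [hψ]
    simp only [AlgHom.coe_comp, Function.comp_apply, AlgEquiv.coe_algHom]
    rw [← h1]
    rw [show (hf_alg.aevalEquiv.symm (hf_alg.aevalEquiv (X i)))
      = X i from hf_alg.aevalEquiv.symm_apply_apply (X i)]
    exact aeval_X y i
  have hψsurj : Function.Surjective ψ := by
    intro c
    exact ⟨algebraMap ℂ R₀ c, ψ.commutes c⟩
  set m : Ideal R₀ := RingHom.ker ψ.toRingHom with hm
  haveI hmmax : m.IsMaximal := RingHom.ker_isMaximal_of_surjective ψ.toRingHom hψsurj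
  have hker : RingHom.ker (algebraMap R₀ (MvPolynomial (Fin r) ℂ)) ≤ m := by
    intro x hx
    have hx0 : (x : MvPolynomial (Fin r) ℂ) = 0 := hx
    have : x = 0 := Subtype.ext hx0
    rw [this]
    exact Ideal.zero_mem m
  obtain ⟨Q, hQmax, hQcomap⟩ := Ideal.exists_ideal_over_maximal_of_isIntegral m hker
  obtain ⟨x, hx⟩ := MvPolynomial.isMaximal_iff_eq_vanishingIdeal_singleton.mp hQmax
  refine ⟨x, fun i => ?_⟩
  set z : R₀ := ⟨f i, hfmem i⟩ - algebraMap ℂ R₀ (y i) with hz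
  have hψz : ψ z = 0 := by
    rw [hz, map_sub, hψf, ψ.commutes]
    simp
  have hzm : z ∈ m := hψz
  have hzQ : algebraMap R₀ (MvPolynomial (Fin r) ℂ) z ∈ Q := by
    rw [← hQcomap] at hzm
    exact hzm
  have hval : algebraMap R₀ (MvPolynomial (Fin r) ℂ) z = f i - C (y i) := rfl
  rw [hval, hx] at hzQ
  have := (MvPolynomial.mem_vanishingIdeal_singleton_iff x (f i - C (y i))).mp hzQ
  rw [map_sub, aeval_C, sub_eq_zero] at this
  exact this

lemma aeval_monomial_isHomogeneous {r : ℕ} (deg : Fin r → ℕ)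
    (f : Fin r → MvPolynomial (Fin r) ℂ) (hf_hom : ∀ i, (f i).IsHomogeneous (deg i))
    (m : Fin r →₀ ℕ) (c : ℂ) :
    (aeval f (monomial m c)).IsHomogeneous (Finsupp.weight deg m) := by
  rw [aeval_monomial]
  have h1 : (Finsupp.prod m fun i k => f i ^ k).IsHomogeneous (Finsupp.weight deg m) := by
    rw [Finsupp.prod, Finsupp.weight_apply, Finsupp.sum]
    have := MvPolynomial.IsHomogeneous.prod m.support (fun i => f i ^ m i)
      (fun i => deg i * m i) (fun i _ => (hf_hom i).pow (m i))
    convert this using 2 with i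
    rw [smul_eq_mul, mul_comm]
  have h2 : (algebraMap ℂ (MvPolynomial (Fin r) ℂ) c * Finsupp.prod m fun i k => f i ^ k).IsHomogeneous
      (Finsupp.weight deg m) := by
    have := h1.C_mul c
    simpa [algebraMap_eq] using this
  exact h2

lemma whc_aeval {r : ℕ} (deg : Fin r → ℕ)
    (f : Fin r → MvPolynomial (Fin r) ℂ) (hf_hom : ∀ i, (f i).IsHomogeneous (deg i))
    (k : ℕ) (p : MvPolynomial (Fin r) ℂ) :
    weightedHomogeneousComponent (1 : Fin r → ℕ) k (aeval f p)
      = aeval f (weightedHomogeneousComponent deg k p) := by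
  conv_lhs => rw [p.as_sum]
  conv_rhs => rw [p.as_sum]
  rw [map_sum, map_sum, map_sum, map_sum]
  refine Finset.sum_congr rfl fun m _ => ?_
  by_cases hk : Finsupp.weight deg m = k
  · rw [(isWeightedHomogeneous_monomial deg m _ hk).weightedHomogeneousComponent_same]
    have : (aeval f (monomial m (coeff m p))).IsHomogeneous k := by
      rw [← hk]; exact aeval_monomial_isHomogeneous deg f hf_hom m _
    exact this.weightedHomogeneousComponent_same
  · rw [(isWeightedHomogeneous_monomial deg m _ rfl).weightedHomogeneousComponent_ne k (Ne.symm hk)]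
    have : (aeval f (monomial m (coeff m p))).IsHomogeneous (Finsupp.weight deg m) :=
      aeval_monomial_isHomogeneous deg f hf_hom m _
    rw [this.weightedHomogeneousComponent_ne k (Ne.symm hk), map_zero]

lemma delta_weighted_homogeneous {r : ℕ} (deg : Fin r → ℕ)
    (f : Fin r → MvPolynomial (Fin r) ℂ) (hf_hom : ∀ i, (f i).IsHomogeneous (deg i))
    (hf_alg : AlgebraicIndependent ℂ f)
    (Δ : MvPolynomial (Fin r) ℂ) (K : ℕ) (hG : (aeval f Δ).IsHomogeneous K) :
    ∀ m ∈ Δ.support, Finsupp.weight deg m = K := by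
  intro m hm
  by_contra hk
  set k : ℕ := Finsupp.weight deg m with hkdef
  have hP : weightedHomogeneousComponent deg k Δ ≠ 0 := by
    intro h0
    have := coeff_weightedHomogeneousComponent (w := deg) k Δ m
    rw [h0, if_pos hkdef.symm] at this
    simp only [coeff_zero] at this
    exact (mem_support_iff.mp hm) this.symm
  have h1 : aeval f (weightedHomogeneousComponent deg k Δ) = 0 := by
    rw [← whc_aeval deg f hf_hom]
    exact hG.weightedHomogeneousComponent_ne k hk
  have h2 : weightedHomogeneousComponent deg k Δ = 0 := by
    have hinj : Function.Injective (aeval (R := ℂ) f) := hf_alg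
    apply hinj
    rw [h1, map_zero]
  exact hP h2

lemma mem_fixedSpace_iff {r : ℕ} (w : (Fin r → ℂ) ≃ₗ[ℂ] (Fin r → ℂ)) (v : Fin r → ℂ) :
    v ∈ fixedSpace w ↔ w v = v := by
  rw [fixedSpace, LinearMap.mem_ker, LinearMap.sub_apply, LinearMap.id_apply, sub_eq_zero]
  exact Iff.rfl

lemma fixedSpace_eq_top_iff {r : ℕ} (w : (Fin r → ℂ) ≃ₗ[ℂ] (Fin r → ℂ)) :
    fixedSpace w = ⊤ ↔ w = 1 := by
  constructor
  · intro h
    apply LinearEquiv.toLinearMap_injective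
    apply LinearMap.ext
    intro v
    have : v ∈ fixedSpace w := h ▸ Submodule.mem_top
    rw [mem_fixedSpace_iff] at this
    exact this
  · intro h
    subst h
    rw [Submodule.eq_top_iff']
    intro v
    rw [mem_fixedSpace_iff]
    rfl

section

variable {r : ℕ} (hr : 0 < r) (W : Subgroup ((Fin r → ℂ) ≃ₗ[ℂ] (Fin r → ℂ)))
  (hWfin : (W : Set ((Fin r → ℂ) ≃ₗ[ℂ] (Fin r → ℂ))).Finite)

include hWfin

/-- Characterization of the pointwise stabilizer of a reflecting hyperplane. -/
lemma stabilizer_char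
    (H : Submodule ℂ (Fin r → ℂ)) (hHrank : Module.finrank ℂ H = r - 1)
    (w : (Fin r → ℂ) ≃ₗ[ℂ] (Fin r → ℂ)) (hw : w ∈ W) (hfix : ∀ v ∈ H, w v = v)
    (hw1 : w ≠ 1) : IsReflection w ∧ fixedSpace w = H := by
  have hle : H ≤ fixedSpace w := fun v hv => (mem_fixedSpace_iff w v).mpr (hfix v hv)
  have hne : fixedSpace w ≠ ⊤ := fun h => hw1 ((fixedSpace_eq_top_iff w).mp h)
  have hlt : Module.finrank ℂ (fixedSpace w) < r := by
    have := Submodule.finrank_lt (K := ℂ) (V := Fin r → ℂ) hne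
    rwa [Module.finrank_fin_fun] at this
  have hge : r - 1 ≤ Module.finrank ℂ (fixedSpace w) := by
    rw [← hHrank]
    exact Submodule.finrank_mono hle
  have heq : Module.finrank ℂ (fixedSpace w) = r - 1 := by omega
  have hfsp : fixedSpace w = H := by
    symm
    apply Submodule.eq_of_le_of_finrank_eq hle
    rw [hHrank, heq]
  have hord : IsOfFinOrder w := by
    haveI : Finite (W : Set ((Fin r → ℂ) ≃ₗ[ℂ] (Fin r → ℂ))) := hWfin
    have : IsOfFinOrder (⟨w, hw⟩ : W) := isOfFinOrder_of_finite _
    exact W.subtype.isOfFinOrder this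
  exact ⟨⟨hord, hw1, heq⟩, hfsp⟩

lemma sum_e_eq
    (A : Finset (Submodule ℂ (Fin r → ℂ)))
    (hA : ∀ H, H ∈ A ↔ ∃ w, w ∈ W ∧ IsReflection w ∧ fixedSpace w = H)
    (e : Submodule ℂ (Fin r → ℂ) → ℕ)
    (he : ∀ H ∈ A, e H = Set.ncard {w | w ∈ W ∧ ∀ v ∈ H, w v = v})
    (N Nstar : ℕ)
    (hN : N = Set.ncard {w | w ∈ W ∧ IsReflection w})
    (hNstar : Nstar = A.card) :
    ∑ H ∈ A, e H = N + Nstar := by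
  classical
  set Refl : Finset ((Fin r → ℂ) ≃ₗ[ℂ] (Fin r → ℂ)) :=
    hWfin.toFinset.filter (fun w => IsReflection w) with hRefl
  have hReflmem : ∀ w, w ∈ Refl ↔ w ∈ W ∧ IsReflection w := by
    intro w
    rw [hRefl, Finset.mem_filter, hWfin.mem_toFinset]
    exact Iff.rfl
  have hNcard : N = Refl.card := by
    rw [hN, show {w | w ∈ W ∧ IsReflection w} = ↑Refl by ext w; simp [hReflmem],
      Set.ncard_coe_finset]
  have hrankA : ∀ H ∈ A, Module.finrank ℂ H = r - 1 := by
    intro H hH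
    obtain ⟨s, _, hsr, hsf⟩ := (hA H).mp hH
    rw [← hsf]
    exact hsr.2.2
  have heH : ∀ H ∈ A, e H = 1 + (Refl.filter (fun s => fixedSpace s = H)).card := by
    intro H hH
    rw [he H hH]
    have hset : {w | w ∈ W ∧ ∀ v ∈ H, w v = v}
        = ↑(insert 1 (Refl.filter (fun s => fixedSpace s = H))) := by
      ext w
      simp only [Set.mem_setOf_eq, Finset.coe_insert, Set.mem_insert_iff, Finset.mem_coe,
        Finset.mem_filter, hReflmem]
      constructor
      · rintro ⟨hw, hfix⟩
        by_cases hw1 : w = 1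
        · left; exact hw1
        · right
          obtain ⟨hrefl, hfsp⟩ := stabilizer_char W hWfin H (hrankA H hH) w hw hfix hw1
          exact ⟨⟨hw, hrefl⟩, hfsp⟩
      · rintro (rfl | ⟨⟨hw, hrefl⟩, hfsp⟩)
        · exact ⟨one_mem W, fun v _ => rfl⟩
        · refine ⟨hw, fun v hv => ?_⟩
          rw [← mem_fixedSpace_iff, hfsp]
          exact hv
    rw [hset, Set.ncard_coe_finset, Finset.card_insert_of_notMem, add_comm]
    intro hmem
    rw [Finset.mem_filter, hReflmem] at hmem
    exact hmem.1.2.2.1 rfl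
  have hfiber : Refl.card = ∑ H ∈ A, (Refl.filter (fun s => fixedSpace s = H)).card := by
    apply Finset.card_eq_sum_card_fiberwise
    intro s hs
    rw [Finset.mem_coe, hReflmem] at hs
    exact (hA (fixedSpace s)).mpr ⟨s, hs.1, hs.2, rfl⟩
  rw [Finset.sum_congr rfl heH, Finset.sum_add_distrib, Finset.sum_const, smul_eq_mul, mul_one,
    ← hfiber, ← hNcard, ← hNstar, add_comm]

end

/-- Let `W` be an irreducible complex reflection group with degrees
`deg 0 ≤ … ≤ deg (r-1)`. The largest degree `deg (r-1)` is a regular number for `W` if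
and only if the valuation of the discriminant polynomial `Δ_f` (the minimal total degree
of a monomial appearing in `Δ_f`, independent of the choice of `f`) equals
`(N + N*) / deg (r-1)` — packaged as `deg (r-1) * valuation = N + N*`. -/
theorem largest_degree_regular_iff_valuation
    (r : ℕ) (hr : 0 < r) (W : Subgroup ((Fin r → ℂ) ≃ₗ[ℂ] (Fin r → ℂ)))
    (hWfin : (W : Set ((Fin r → ℂ) ≃ₗ[ℂ] (Fin r → ℂ))).Finite)
    (hWrefl : Subgroup.closure {w | w ∈ W ∧ IsReflection w} = W)
    (hirr : ∀ U : Submodule ℂ (Fin r → ℂ),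
      (∀ w ∈ W, ∀ v ∈ U, w v ∈ U) → U = ⊥ ∨ U = ⊤)
    (deg : Fin r → ℕ) (hmono : Monotone deg)
    (f : Fin r → MvPolynomial (Fin r) ℂ)
    (hf_hom : ∀ i, (f i).IsHomogeneous (deg i))
    (hf_alg : AlgebraicIndependent ℂ f)
    (hf_gen : ∀ P : MvPolynomial (Fin r) ℂ,
      (∀ w ∈ W, ∀ v : Fin r → ℂ, eval (w v) P = eval v P) ↔
        P ∈ Algebra.adjoin ℂ (Set.range f))
    (A : Finset (Submodule ℂ (Fin r → ℂ)))
    (hA : ∀ H, H ∈ A ↔ ∃ w, w ∈ W ∧ IsReflection w ∧ fixedSpace w = H)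
    (l : Submodule ℂ (Fin r → ℂ) → MvPolynomial (Fin r) ℂ)
    (hl : ∀ H ∈ A, (l H).IsHomogeneous 1 ∧ ∀ v : Fin r → ℂ, (eval v (l H) = 0 ↔ v ∈ H))
    (e : Submodule ℂ (Fin r → ℂ) → ℕ)
    (he : ∀ H ∈ A, e H = Set.ncard {w | w ∈ W ∧ ∀ v ∈ H, w v = v})
    (N Nstar : ℕ)
    (hN : N = Set.ncard {w | w ∈ W ∧ IsReflection w})
    (hNstar : Nstar = A.card)
    (Δ : MvPolynomial (Fin r) ℂ)
    (hΔ : aeval f Δ = ∏ H ∈ A, l H ^ e H)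
    (hΔne : Δ ≠ 0) :
    IsRegularNumber W (deg ⟨r - 1, by omega⟩) ↔
      deg ⟨r - 1, by omega⟩ *
        sInf {k : ℕ | ∃ m ∈ Δ.support, ∑ i, m i = k} = N + Nstar := by
  classical
  set dtop : ℕ := deg ⟨r - 1, by omega⟩ with hdtop
  -- every degree is at least 1
  have hdeg1 : ∀ i, 1 ≤ deg i := by
    intro i
    by_contra hcon
    have hdi : deg i = 0 := by omega
    have hhom0 : (f i).IsHomogeneous 0 := hdi ▸ hf_hom i
    set a : ℂ := eval 0 (f i) with ha
    have hfC : f i = C a := by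
      apply MvPolynomial.funext
      intro v
      have h0 : eval ((0 : ℂ) • v) (f i) = (0 : ℂ) ^ 0 * eval v (f i) :=
        eval_smul_of_isHomogeneous (f i) hhom0 0 v
      rw [zero_smul, pow_zero, one_mul] at h0
      rw [eval_C]
      exact (ha.trans h0).symm
    have hXC : aeval f (X i - C a) = 0 := by
      rw [map_sub, aeval_X, aeval_C, algebraMap_eq, sub_eq_zero]
      exact hfC
    have hinj : Function.Injective (aeval (R := ℂ) f) := hf_alg
    have : (X i - C a : MvPolynomial (Fin r) ℂ) = 0 := by
      apply hinj; rw [hXC, map_zero]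
    have h1 : (1 : ℂ) - a = 0 := by
      have := congrArg (eval (fun _ => (1 : ℂ))) this
      simpa using this
    have h2 : (0 : ℂ) - a = 0 := by
      have := congrArg (eval (fun _ => (0 : ℂ))) this
      simpa using this
    rw [sub_eq_zero] at h1 h2
    exact one_ne_zero (h1.trans h2.symm)
  have hdle : ∀ i, deg i ≤ dtop := by
    intro i
    have h1 : (i : ℕ) ≤ r - 1 := by have := i.isLt; omega
    exact hmono (show i ≤ ⟨r - 1, by omega⟩ by rw [Fin.le_def]; simpa using h1)
  have hdtop1 : 1 ≤ dtop := hdeg1 _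
  -- the product is homogeneous of degree N + Nstar
  have hsum_e : ∑ H ∈ A, e H = N + Nstar := sum_e_eq W hWfin A hA e he N Nstar hN hNstar
  have hG : (aeval f Δ).IsHomogeneous (N + Nstar) := by
    rw [hΔ, ← hsum_e]
    apply MvPolynomial.IsHomogeneous.prod
    intro H hH
    have := ((hl H hH).1).pow (e H)
    rwa [one_mul] at this
  have hweight : ∀ m ∈ Δ.support, (Finsupp.weight deg m : ℕ) = N + Nstar :=
    delta_weighted_homogeneous deg f hf_hom hf_alg Δ (N + Nstar) hG
  have hwd : ∀ m : Fin r →₀ ℕ, (Finsupp.weight deg m : ℕ) = ∑ i, m i * deg i := by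
    intro m
    rw [Finsupp.weight_apply, Finsupp.sum_fintype]
    · simp [smul_eq_mul]
    · intro i; rw [zero_smul]
  have hweight' : ∀ m ∈ Δ.support, ∑ i, m i * deg i = N + Nstar := by
    intro m hm; rw [← hwd]; exact hweight m hm
  -- the valuation
  set S : Set ℕ := {k : ℕ | ∃ m ∈ Δ.support, ∑ i, m i = k} with hS
  have hSne : S.Nonempty := by
    obtain ⟨m, hm⟩ := Finset.nonempty_iff_ne_empty.mpr
      (fun h => hΔne (support_eq_empty.mp h))
    exact ⟨∑ i, m i, ⟨m, hm, rfl⟩⟩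
  have hval_mem : sInf S ∈ S := Nat.sInf_mem hSne
  obtain ⟨m₀, hm₀supp, hm₀sum⟩ := hval_mem
  -- lower bound: N + Nstar ≤ dtop * sInf S
  have hlower : N + Nstar ≤ dtop * sInf S := by
    rw [← hweight' m₀ hm₀supp, ← hm₀sum, Finset.mul_sum]
    apply Finset.sum_le_sum
    intro i _
    calc m₀ i * deg i ≤ m₀ i * dtop := Nat.mul_le_mul_left _ (hdle i)
    _ = dtop * m₀ i := Nat.mul_comm _ _
  -- e H is positive
  have heH1 : ∀ H ∈ A, e H ≠ 0 := by
    intro H hH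
    rw [he H hH]
    have hfin : {w | w ∈ W ∧ ∀ v ∈ H, w v = v}.Finite :=
      hWfin.subset (fun w hw => hw.1)
    have hne : {w | w ∈ W ∧ ∀ v ∈ H, w v = v}.Nonempty :=
      ⟨1, one_mem W, fun v _ => rfl⟩
    have hpos : 0 < Set.ncard {w | w ∈ W ∧ ∀ v ∈ H, w v = v} := (Set.ncard_pos hfin).mpr hne
    omega
  constructor
  · -- regular implies valuation formula
    rintro ⟨ζ, hζ, w, hwW, v, hvreg, hwv⟩
    have hfv : ∀ i, deg i ≠ dtop → eval v (f i) = 0 := by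
      intro i hne
      have hinv : eval (w v) (f i) = eval v (f i) :=
        (hf_gen (f i)).mpr (Algebra.subset_adjoin (Set.mem_range_self i)) w hwW v
      rw [hwv, eval_smul_of_isHomogeneous (f i) (hf_hom i) ζ v] at hinv
      by_contra h0
      have hζ1 : ζ ^ deg i = 1 :=
        mul_right_cancel₀ h0 (hinv.trans (one_mul (eval v (f i))).symm)
      have hdvd : dtop ∣ deg i := (hζ.pow_eq_one_iff_dvd (deg i)).mp hζ1
      have := Nat.le_of_dvd (by have := hdeg1 i; omega) hdvd
      have := hdle i
      omega
    have hvH : ∀ H ∈ A, eval v (l H) ≠ 0 := by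
      intro H hH h0
      have hvmem : v ∈ H := ((hl H hH).2 v).mp h0
      obtain ⟨s, hsW, hsrefl, hsfix⟩ := (hA H).mp hH
      exact hvreg s hsW hsrefl (by rw [← mem_fixedSpace_iff, hsfix]; exact hvmem)
    have hΔy : eval (fun i => eval v (f i)) Δ ≠ 0 := by
      rw [← eval_aeval', hΔ, map_prod]
      apply Finset.prod_ne_zero_iff.mpr
      intro H hH
      rw [map_pow]
      exact pow_ne_zero _ (hvH H hH)
    rw [eval_eq'] at hΔy
    obtain ⟨m, hmsupp, hmne⟩ := Finset.exists_ne_zero_of_sum_ne_zero hΔy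
    have hmtop : ∀ i, m i ≠ 0 → deg i = dtop := by
      intro i hmi
      by_contra hne
      apply hmne
      have hz : (fun j => eval v (f j)) i ^ m i = 0 := by
        simp only []
        rw [hfv i hne, zero_pow hmi]
      rw [Finset.prod_eq_zero (Finset.mem_univ i) hz, mul_zero]
    have hkey : dtop * (∑ i, m i) = N + Nstar := by
      rw [← hweight' m hmsupp, Finset.mul_sum]
      apply Finset.sum_congr rfl
      intro i _
      by_cases hmi : m i = 0
      · rw [hmi]; ring
      · rw [hmtop i hmi]; ring
    have hupper : dtop * sInf S ≤ N + Nstar := by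
      rw [← hkey]
      exact Nat.mul_le_mul_left _ (Nat.sInf_le ⟨m, hmsupp, rfl⟩)
    exact le_antisymm hupper hlower
  · -- valuation formula implies regular
    intro hval
    have hvaldtop : dtop * sInf S = N + Nstar := hval
    have hS0 : ∀ i, m₀ i ≠ 0 → deg i = dtop := by
      have h1 : ∑ i, m₀ i * deg i = ∑ i, m₀ i * dtop := by
        rw [hweight' m₀ hm₀supp, ← hvaldtop, ← hm₀sum, Finset.mul_sum]
        apply Finset.sum_congr rfl
        intro i _
        ring
      have h2 : ∀ i ∈ Finset.univ, m₀ i * deg i ≤ m₀ i * dtop :=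
        fun i _ => Nat.mul_le_mul_left _ (hdle i)
      have h3 := (Finset.sum_eq_sum_iff_of_le h2).mp h1
      intro i hmi
      have h4 := h3 i (Finset.mem_univ i)
      have h5 := Nat.eq_of_mul_eq_mul_left (Nat.pos_of_ne_zero hmi) h4
      exact h5
    set g : Fin r → MvPolynomial (Fin r) ℂ :=
      fun i => if deg i = dtop then X i else 0 with hg
    have hcoeff : coeff m₀ (aeval g Δ) = coeff m₀ Δ := by
      conv_lhs => rw [Δ.as_sum]
      rw [map_sum, MvPolynomial.coeff_sum]
      rw [Finset.sum_eq_single m₀ ?other ?notmem]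
      case notmem => exact fun h => absurd hm₀supp h
      case other =>
        intro m hm hne
        by_cases hc : ∀ i ∈ m.support, deg i = dtop
        · rw [aeval_monomial]
          have hprod : (Finsupp.prod m fun i k => g i ^ k)
              = Finsupp.prod m fun i k => (X i : MvPolynomial (Fin r) ℂ) ^ k := by
            apply Finset.prod_congr rfl
            intro i hi
            rw [hg]
            simp only [if_pos (hc i hi)]
          rw [hprod, algebraMap_eq, ← monomial_eq, coeff_monomial, if_neg hne]
        · push_neg at hc
          obtain ⟨i, hi, hine⟩ := hc
          rw [aeval_monomial]
          have hzero : (Finsupp.prod m fun i k => g i ^ k) = 0 := by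
            apply Finset.prod_eq_zero hi
            rw [hg]
            simp only [if_neg hine]
            exact zero_pow (Finsupp.mem_support_iff.mp hi)
          rw [hzero, mul_zero, coeff_zero]
      · rw [aeval_monomial]
        have hprod : (Finsupp.prod m₀ fun i k => g i ^ k)
            = Finsupp.prod m₀ fun i k => (X i : MvPolynomial (Fin r) ℂ) ^ k := by
          apply Finset.prod_congr rfl
          intro i hi
          rw [hg]
          simp only [if_pos (hS0 i (Finsupp.mem_support_iff.mp hi))]
        rw [hprod, algebraMap_eq, ← monomial_eq, coeff_monomial, if_pos rfl]
    have hΔ''ne : aeval g Δ ≠ 0 := by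
      intro h0
      apply mem_support_iff.mp hm₀supp
      rw [← hcoeff, h0, coeff_zero]
    obtain ⟨y', hy'⟩ : ∃ y', eval y' (aeval g Δ) ≠ 0 := by
      by_contra hcon
      push_neg at hcon
      exact hΔ''ne (MvPolynomial.funext fun x => by rw [hcon x, map_zero])
    set y : Fin r → ℂ := fun i => if deg i = dtop then y' i else 0 with hy
    have hyΔ : eval y Δ ≠ 0 := by
      have heq : eval y' (aeval g Δ) = eval y Δ := by
        rw [eval_aeval']
        have hfun : (fun i => eval y' (g i)) = y := by
          funext i
          rw [hy, hg]
          by_cases hdi : deg i = dtop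
          · simp only [if_pos hdi, eval_X]
          · simp only [if_neg hdi, map_zero]
        rw [hfun]
      rw [← heq]
      exact hy'
    obtain ⟨v, hv⟩ := exists_preimage W hWfin f hf_alg hf_gen y
    have hΔv : eval v (aeval f Δ) ≠ 0 := by
      rw [eval_aeval', show (fun i => eval v (f i)) = y from funext hv]
      exact hyΔ
    have hvH : ∀ H ∈ A, eval v (l H) ≠ 0 := by
      intro H hH h0
      apply hΔv
      rw [hΔ, map_prod]
      apply Finset.prod_eq_zero hH
      rw [map_pow, h0]
      exact zero_pow (heH1 H hH)
    have hvreg : ∀ s, s ∈ W → IsReflection s → s v ≠ v := by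
      intro s hsW hsrefl hsv
      have hmem : v ∈ fixedSpace s := (mem_fixedSpace_iff s v).mpr hsv
      have hHA : fixedSpace s ∈ A := (hA _).mpr ⟨s, hsW, hsrefl, rfl⟩
      exact hvH _ hHA (((hl _ hHA).2 v).mpr hmem)
    have hζ : IsPrimitiveRoot (Complex.exp (2 * Real.pi * Complex.I / dtop)) dtop :=
      Complex.isPrimitiveRoot_exp dtop (by omega)
    set ζ : ℂ := Complex.exp (2 * Real.pi * Complex.I / dtop) with hζdef
    have hagree : ∀ i, eval (ζ • v) (f i) = eval v (f i) := by
      intro i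
      rw [eval_smul_of_isHomogeneous (f i) (hf_hom i) ζ v]
      by_cases hdi : deg i = dtop
      · rw [hdi, hζ.pow_eq_one, one_mul]
      · rw [hv i, hy]
        simp only [if_neg hdi, mul_zero]
    obtain ⟨w, hwW, hwv⟩ := orbit_separation W hWfin f hf_gen (ζ • v) v hagree
    exact ⟨ζ, hζ, w, hwW, v, hvreg, hwv⟩
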